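/- arXiv:1706.00841 — 8 statements merged into one kernel-verified Lean document; each statement's English description precedes it below -/
import Mathlib

section
/- Let q ≥ 2 and k ≥ 1 be integers whose greatest common divisor is greater than 1. Then for every q-ary sequence x of length k there exists an index z with 0 ≤ z ≤ kq−1 such that the weight of y = x ⊕_q b(z) satisfies (k−2)(q−1) ≤ 2·w(y) ≤ (k+2)(q−1), i.e. β_{k,q} − (q−1) ≤ w(y) ≤ β_{k,q} + (q−1) where β_{k,q} = k(q−1)/2. -/
/-- Weight of a q-ary sequence: sum of its symbols. -/
def wt {k : ℕ} (x : Fin k → ℕ) : ℕ := ∑ i, x i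

/-- Weighting sequence b(s,p): b_i = (s+1) mod q if i-1 < p, else s
    (indices here are 0-based, so the condition is i < p). -/
def bvec (q k s p : ℕ) : Fin k → ℕ := fun i => if (i : ℕ) < p then (s + 1) % q else s

/-- The z-th weighting sequence b(z) = b(s,p) where z = s·k + p, 0 ≤ p ≤ k-1. -/
def bz (q k z : ℕ) : Fin k → ℕ := bvec q k (z / k) (z % k)

/-- Symbol-wise addition modulo q. -/
def addq (q : ℕ) {k : ℕ} (x y : Fin k → ℕ) : Fin k → ℕ := fun i => (x i + y i) % q

lemma cross (P : ℕ → Prop) [DecidablePred P] :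
    ∀ b a, a ≤ b → P a → ¬ P b → ∃ z, a ≤ z ∧ z < b ∧ P z ∧ ¬ P (z+1) := by
  intro b
  induction b with
  | zero => intro a ha hPa hPb; interval_cases a; exact absurd hPa hPb
  | succ n ih =>
    intro a ha hPa hPb
    by_cases hn : P n
    · have han : a ≤ n := by
        by_contra hc
        have : a = n + 1 := by omega
        exact hPb (this ▸ hPa)
      exact ⟨n, han, Nat.lt_succ_self n, hn, hPb⟩
    · have han : a ≤ n := by
        by_contra hc
        have : a = n + 1 := by omega
        exact hPb (this ▸ hPa)
      obtain ⟨z, h1, h2, h3, h4⟩ := ih a han hPa hn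
      exact ⟨z, h1, by omega, h3, h4⟩

lemma shift_sum (q a : ℕ) (hq : 0 < q) :
    ∑ s ∈ Finset.range q, (a + s) % q = ∑ s ∈ Finset.range q, s := by
  have har : a % q < q := Nat.mod_lt _ hq
  have hda := Nat.div_add_mod a q
  refine Finset.sum_nbij' (fun s => (a + s) % q) (fun t => (t + (q - a % q)) % q)
    (fun s hs => Finset.mem_range.mpr (Nat.mod_lt _ hq))
    (fun t ht => Finset.mem_range.mpr (Nat.mod_lt _ hq)) ?_ ?_ (fun s hs => rfl)
  · intro s hs
    rw [Finset.mem_range] at hs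
    show ((a + s) % q + (q - a % q)) % q = s
    rw [Nat.mod_add_mod]
    have hmul : q * (a / q + 1) = q * (a / q) + q := by ring
    have h1 : a + s + (q - a % q) = s + q * (a / q + 1) := by omega
    rw [h1, Nat.add_mul_mod_self_left, Nat.mod_eq_of_lt hs]
  · intro t ht
    rw [Finset.mem_range] at ht
    show (a + (t + (q - a % q)) % q) % q = t
    rw [Nat.add_mod_mod]
    have hmul : q * (a / q + 1) = q * (a / q) + q := by ring
    have h1 : a + (t + (q - a % q)) = t + q * (a / q + 1) := by omega
    rw [h1, Nat.add_mul_mod_self_left, Nat.mod_eq_of_lt ht]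

lemma point (q k : ℕ) (hk : 0 < k) (x : Fin k → ℕ) (z : ℕ) (i : Fin k) :
    (x i + bz q k (z+1) i) % q
      = ((x i + bz q k z i) + (if (i:ℕ) = z % k then 1 else 0)) % q := by
  have hp : z % k < k := Nat.mod_lt _ hk
  have hdz := Nat.div_add_mod z k
  unfold bz bvec
  rcases Nat.lt_or_ge (z % k + 1) k with h | h
  · have hz1 : z + 1 = k * (z / k) + (z % k + 1) := by omega
    have hd : (z+1) / k = z / k := by
      rw [hz1, Nat.mul_add_div hk, Nat.div_eq_of_lt h, Nat.add_zero]
    have hm : (z+1) % k = z % k + 1 := by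
      rw [hz1, Nat.mul_add_mod, Nat.mod_eq_of_lt h]
    rw [hd, hm]
    rcases Nat.lt_trichotomy (i : ℕ) (z % k) with hi | hi | hi
    · simp only [if_pos (by omega : (i:ℕ) < z % k + 1), if_pos hi,
        if_neg (by omega : ¬ (i:ℕ) = z % k), Nat.add_zero]
    · simp only [if_pos (by omega : (i:ℕ) < z % k + 1), if_neg (by omega : ¬ (i:ℕ) < z % k),
        if_pos hi]
      rw [Nat.add_mod_mod, Nat.add_assoc]
    · simp only [if_neg (by omega : ¬ (i:ℕ) < z % k + 1), if_neg (by omega : ¬ (i:ℕ) < z % k),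
        if_neg (by omega : ¬ (i:ℕ) = z % k), Nat.add_zero]
  · have hpk : z % k = k - 1 := by omega
    have hmul : k * (z / k + 1) = k * (z / k) + k := by ring
    have hz1 : z + 1 = k * (z / k + 1) := by omega
    have hd : (z+1) / k = z / k + 1 := by rw [hz1, Nat.mul_div_cancel_left _ hk]
    have hm : (z+1) % k = 0 := by rw [hz1, Nat.mul_mod_right]
    rw [hd, hm]
    simp only [Nat.not_lt_zero, if_false]
    rcases Nat.lt_or_ge (i : ℕ) (z % k) with hi | hi
    · simp only [if_pos hi, if_neg (by omega : ¬ (i:ℕ) = z % k), Nat.add_zero]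
      rw [Nat.add_mod_mod]
    · have : (i : ℕ) = z % k := by omega
      simp only [if_neg (by omega : ¬ (i:ℕ) < z % k), if_pos this, Nat.add_assoc]

lemma step (q k : ℕ) (hq : 2 ≤ q) (hk : 1 ≤ k) (x : Fin k → ℕ) (z : ℕ) :
    wt (addq q x (bz q k (z+1))) = wt (addq q x (bz q k z)) + 1 ∨
    wt (addq q x (bz q k (z+1))) + q = wt (addq q x (bz q k z)) + 1 := by
  have hp : z % k < k := Nat.mod_lt _ (by omega)
  set p : Fin k := ⟨z % k, hp⟩ with hpdef
  have hq0 : 0 < q := by omega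
  have e1 : wt (addq q x (bz q k (z+1)))
      = (x p + bz q k z p + 1) % q + ∑ i ∈ Finset.univ.erase p, addq q x (bz q k z) i := by
    unfold wt
    rw [← Finset.add_sum_erase _ _ (Finset.mem_univ p)]
    congr 1
    · have := point q k (by omega) x z p
      simp only [addq, this, if_pos (rfl : (p:ℕ) = z % k), if_true]
      simp [hpdef]
    · refine Finset.sum_congr rfl (fun i hi => ?_)
      have hne : (i : ℕ) ≠ z % k := by
        intro hcon
        exact (Finset.mem_erase.mp hi).1 (Fin.ext hcon)
      have := point q k (by omega) x z i
      simp only [addq, this, if_neg hne, Nat.add_zero]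
  have e2 : wt (addq q x (bz q k z))
      = (x p + bz q k z p) % q + ∑ i ∈ Finset.univ.erase p, addq q x (bz q k z) i := by
    unfold wt
    rw [← Finset.add_sum_erase _ _ (Finset.mem_univ p)]
    rfl
  set m := x p + bz q k z p with hm
  have hmq : m % q < q := Nat.mod_lt _ hq0
  rcases Nat.lt_or_ge (m % q + 1) q with h | h
  · left
    rw [e1, e2]
    have : (m + 1) % q = m % q + 1 := by
      rw [Nat.add_mod, Nat.mod_eq_of_lt (by omega : 1 < q), Nat.mod_eq_of_lt h]
    omega
  · right
    rw [e1, e2]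
    have hq1 : m % q + 1 = q := by omega
    have : (m + 1) % q = 0 := by
      rw [Nat.add_mod, Nat.mod_eq_of_lt (by omega : 1 < q), hq1, Nat.mod_self]
    omega

lemma colsum (q k : ℕ) (hq : 2 ≤ q) (hk : 1 ≤ k) (x : Fin k → ℕ) :
    2 * ∑ s ∈ Finset.range q, wt (addq q x (bz q k (s*k))) = k * (q * (q-1)) := by
  have hq0 : 0 < q := by omega
  have hb : ∀ s i, addq q x (bz q k (s*k)) i = (x i + s) % q := by
    intro s i
    unfold addq bz bvec
    rw [Nat.mul_div_cancel _ (by omega : 0 < k), Nat.mul_mod_left]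
    simp
  have h1 : ∀ s, wt (addq q x (bz q k (s*k))) = ∑ i, (x i + s) % q := by
    intro s; unfold wt; exact Finset.sum_congr rfl (fun i _ => hb s i)
  calc 2 * ∑ s ∈ Finset.range q, wt (addq q x (bz q k (s*k)))
      = 2 * ∑ s ∈ Finset.range q, ∑ i, (x i + s) % q := by
        rw [Finset.sum_congr rfl (fun s _ => h1 s)]
    _ = 2 * ∑ i : Fin k, ∑ s ∈ Finset.range q, (x i + s) % q := by rw [Finset.sum_comm]
    _ = 2 * ∑ i : Fin k, ∑ s ∈ Finset.range q, s := by
        rw [Finset.sum_congr rfl (fun i _ => shift_sum q (x i) hq0)]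
    _ = ∑ i : Fin k, ((∑ s ∈ Finset.range q, s) * 2) := by
        rw [Finset.mul_sum]; exact Finset.sum_congr rfl (fun i _ => by ring)
    _ = ∑ i : Fin k, q * (q - 1) := by
        exact Finset.sum_congr rfl (fun i _ => Finset.sum_range_id_mul_two q)
    _ = k * (q * (q-1)) := by
        rw [Finset.sum_const, Finset.card_univ, Fintype.card_fin, smul_eq_mul]

/-- if gcd(q,k) > 1, every q-ary sequence x of length k admits a z,
    0 ≤ z ≤ kq-1, with β_{k,q} - (q-1) ≤ w(x ⊕_q b(z)) ≤ β_{k,q} + (q-1),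
    i.e. (k-2)(q-1) ≤ 2·w(x ⊕_q b(z)) ≤ (k+2)(q-1). -/
theorem stmt0 (q k : ℕ) (hq : 2 ≤ q) (hk : 1 ≤ k) (hgcd : 1 < Nat.gcd q k)
    (x : Fin k → ℕ) (hx : ∀ i, x i < q) :
    ∃ z : ℕ, z ≤ k * q - 1 ∧
      ((k : ℤ) - 2) * ((q : ℤ) - 1) ≤ 2 * (wt (addq q x (bz q k z)) : ℤ) ∧
      2 * (wt (addq q x (bz q k z)) : ℤ) ≤ ((k : ℤ) + 2) * ((q : ℤ) - 1) := by
  have hq0 : 0 < q := by omega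
  set B := k * (q - 1) with hB
  have hcol := colsum q k hq hk x
  have hqB : k * (q * (q-1)) = q * B := by rw [hB]; ring
  rw [hqB] at hcol
  have hsum2 : ∑ s ∈ Finset.range q, 2 * wt (addq q x (bz q k (s*k))) = q * B := by
    rw [← Finset.mul_sum]; exact hcol
  have hconst : ∑ _s ∈ Finset.range q, B = q * B := by
    rw [Finset.sum_const, Finset.card_range, smul_eq_mul]
  have hne : (Finset.range q).Nonempty := ⟨0, Finset.mem_range.mpr hq0⟩
  have hlow : ∃ s, s < q ∧ 2 * wt (addq q x (bz q k (s*k))) ≤ B := by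
    by_contra hcon
    push_neg at hcon
    have := Finset.sum_lt_sum_of_nonempty hne
      (fun s hs => hcon s (Finset.mem_range.mp hs))
    rw [hconst, hsum2] at this
    exact lt_irrefl _ this
  have hhigh : ∃ s, s < q ∧ B ≤ 2 * wt (addq q x (bz q k (s*k))) := by
    by_contra hcon
    push_neg at hcon
    have := Finset.sum_lt_sum_of_nonempty hne
      (fun s hs => hcon s (Finset.mem_range.mp hs))
    rw [hconst, hsum2] at this
    exact lt_irrefl _ this
  obtain ⟨s₁, hs₁q, hs₁⟩ := hlow
  obtain ⟨s₂, hs₂q, hs₂⟩ := hhigh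
  have hbound : ∀ s, s < q → s * k ≤ k * q - 1 := by
    intro s hs
    have h1 : (s+1) * k ≤ q * k := Nat.mul_le_mul_right k (by omega)
    have h2 : (s+1) * k = s * k + k := by ring
    have h3 : q * k = k * q := Nat.mul_comm q k
    omega
  suffices hfin : ∃ z, z ≤ k * q - 1 ∧
      B ≤ 2 * wt (addq q x (bz q k z)) + 2*(q-1) ∧
      2 * wt (addq q x (bz q k z)) ≤ B + 2*(q-1) by
    obtain ⟨z, hz1, hz2, hz3⟩ := hfin
    have h2 : (B:ℤ) = (k:ℤ) * ((q:ℤ)-1) := by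
      rw [hB]; push_cast [Nat.cast_sub (by omega : 1 ≤ q)]; ring
    refine ⟨z, hz1, ?_, ?_⟩
    · have hz2' : (B:ℤ) ≤ 2 * (wt (addq q x (bz q k z)) : ℤ) + 2*((q:ℤ)-1) := by omega
      linarith
    · have hz3' : 2 * (wt (addq q x (bz q k z)) : ℤ) ≤ (B:ℤ) + 2*((q:ℤ)-1) := by omega
      linarith
  rcases Nat.lt_trichotomy (s₁ * k) (s₂ * k) with hlt | heq | hgt
  · by_cases hb2 : 2 * wt (addq q x (bz q k (s₂*k))) ≤ B
    · exact ⟨s₂*k, hbound s₂ hs₂q, by omega, by omega⟩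
    · obtain ⟨z, hz1, hz2, hz3, hz4⟩ :=
        cross (fun z => 2 * wt (addq q x (bz q k z)) ≤ B) (s₂*k) (s₁*k)
          (le_of_lt hlt) hs₁ hb2
      rcases step q k hq hk x z with hstep | hstep
      · refine ⟨z+1, ?_, by omega, by omega⟩
        have := hbound s₂ hs₂q; omega
      · exact (hz4 (by omega)).elim
  · have hs₂' : B ≤ 2 * wt (addq q x (bz q k (s₁*k))) := by rw [heq]; exact hs₂
    exact ⟨s₁*k, hbound s₁ hs₁q, by omega, by omega⟩
  · by_cases hb2 : 2 * wt (addq q x (bz q k (s₂*k))) ≤ B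
    · exact ⟨s₂*k, hbound s₂ hs₂q, by omega, by omega⟩
    · obtain ⟨z, hz1, hz2, hz3, hz4⟩ :=
        cross (fun z => B < 2 * wt (addq q x (bz q k z))) (s₁*k) (s₂*k)
          (le_of_lt hgt) (by omega) (by omega)
      rcases step q k hq hk x z with hstep | hstep
      · exact absurd hz3 (by omega)
      · refine ⟨z, ?_, by omega, by omega⟩
        have := hbound s₁ hs₁q; omega
end

section
/- Let q ≥ 2 and k ≥ 1 be integers and x a q-ary sequence of length k. For every index z with 0 ≤ z ≤ kq−2, the weight change from one weighting step to the next satisfies w(x ⊕_q b(z+1)) − w(x ⊕_q b(z)) ∈ {1, −(q−1)}; that is, the weight progression of z ↦ w(x ⊕_q b(z)) is a path whose steps are increases of 1 or decreases of q−1. -/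
lemma step_lemma (q t : ℕ) (hq : 2 ≤ q) (ht : t < q) :
    (((t + 1) % q : ℕ) : ℤ) - (t : ℤ) = 1 ∨ (((t + 1) % q : ℕ) : ℤ) - (t : ℤ) = -((q : ℤ) - 1) := by
  rcases lt_or_eq_of_le (Nat.succ_le_of_lt ht) with h | h
  · left; rw [Nat.mod_eq_of_lt h]; push_cast; ring
  · right
    have h0 : (t + 1) % q = 0 := by rw [← h, Nat.mod_self]
    rw [h0]; push_cast; omega

lemma mod_shift (q a s : ℕ) : (a + (s + 1) % q) % q = ((a + s) % q + 1) % q := by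
  have h1 : (a + (s + 1) % q) % q = (a + (s + 1)) % q :=
    Nat.ModEq.add_left a (Nat.mod_modEq _ _)
  have h2 : ((a + s) % q + 1) % q = (a + s + 1) % q :=
    Nat.ModEq.add_right 1 (Nat.mod_modEq _ _)
  rw [h1, h2, ← Nat.add_assoc]

lemma main_aux {k : ℕ} (q : ℕ) (hq : 2 ≤ q) (f g : Fin k → ℕ) (i0 : Fin k)
    (hsame : ∀ i, i ≠ i0 → g i = f i) (hi0 : g i0 = (f i0 + 1) % q) (hf : f i0 < q) :
    (wt g : ℤ) - wt f = 1 ∨ (wt g : ℤ) - wt f = -((q : ℤ) - 1) := by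
  have hdiff : (wt g : ℤ) - wt f = (g i0 : ℤ) - f i0 := by
    unfold wt
    push_cast
    rw [← Finset.sum_sub_distrib]
    apply Finset.sum_eq_single
    · intro i _ hne; rw [hsame i hne]; ring
    · intro h; exact absurd (Finset.mem_univ i0) h
  rw [hdiff, hi0]
  exact step_lemma q (f i0) hq hf

/-- each step of the weight progression z ↦ w(x ⊕_q b(z)) is either an
    increase of 1 or a decrease of q-1. -/
theorem stmt3 (q k : ℕ) (hq : 2 ≤ q) (hk : 1 ≤ k)
    (x : Fin k → ℕ) (hx : ∀ i, x i < q) :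
    ∀ z : ℕ, z ≤ k * q - 2 →
      (wt (addq q x (bz q k (z + 1))) : ℤ) - (wt (addq q x (bz q k z)) : ℤ) = 1 ∨
      (wt (addq q x (bz q k (z + 1))) : ℤ) - (wt (addq q x (bz q k z)) : ℤ) = -((q : ℤ) - 1) := by
  intro z hz
  have hk0 : 0 < k := hk
  have hq0 : 0 < q := by omega
  have hkq : 2 ≤ k * q := le_trans hq (Nat.le_mul_of_pos_left q hk0)
  have hzlt : z + 1 < k * q := by omega
  set s := z / k with hs
  set p := z % k with hp
  have hzdecomp : z = k * s + p := by
    exact (Nat.div_add_mod z k).symm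
  have hpk : p < k := Nat.mod_lt _ hk0
  have hsq : s < q := Nat.div_lt_of_lt_mul (by omega)
  set i0 : Fin k := ⟨p, hpk⟩ with hi0def
  by_cases hcase : p + 1 < k
  · -- Case A: same block, p increments
    have e1 : (z + 1) / k = s := by
      rw [show z + 1 = (p + 1) + k * s by omega,
        Nat.add_mul_div_left _ _ hk0, Nat.div_eq_of_lt hcase, Nat.zero_add]
    have e2 : (z + 1) % k = p + 1 := by
      rw [show z + 1 = (p + 1) + k * s by omega,
        Nat.add_mul_mod_self_left, Nat.mod_eq_of_lt hcase]
    apply main_aux q hq _ _ i0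
    · intro i hne
      have hnep : (i : ℕ) ≠ p := fun h => hne (Fin.ext h)
      simp only [addq, bz, bvec, e1, e2, ← hs, ← hp]
      rcases Nat.lt_or_ge (i : ℕ) p with h | h
      · rw [if_pos h, if_pos (by omega)]
      · rw [if_neg (by omega), if_neg (by omega)]
    · simp only [addq, bz, bvec, e1, e2, ← hs, ← hp, hi0def]
      rw [if_pos (by omega : p < p + 1), if_neg (by omega : ¬ p < p)]
      exact mod_shift q (x i0) s
    · exact Nat.mod_lt _ hq0
  · -- Case B: end of block, p = k - 1
    have hpk1 : p + 1 = k := by omega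
    have hz1 : z + 1 = k * (s + 1) := by rw [Nat.mul_add, Nat.mul_one]; omega
    have hsq2 : s + 1 < q := by
      by_contra h
      have : s + 1 = q := by omega
      rw [hz1, this] at hzlt
      omega
    have e1 : (z + 1) / k = s + 1 := by rw [hz1, Nat.mul_div_cancel_left _ hk0]
    have e2 : (z + 1) % k = 0 := by rw [hz1, Nat.mul_mod_right]
    apply main_aux q hq _ _ i0
    · intro i hne
      have hnep : (i : ℕ) ≠ p := fun h => hne (Fin.ext h)
      have hilt : (i : ℕ) < p := by have := i.isLt; omega
      simp only [addq, bz, bvec, e1, e2, ← hs, ← hp]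
      rw [if_neg (by omega : ¬ (i : ℕ) < 0), if_pos hilt, Nat.mod_eq_of_lt hsq2]
    · simp only [addq, bz, bvec, e1, e2, ← hs, ← hp, hi0def]
      rw [if_neg (by omega : ¬ p < 0), if_neg (by omega : ¬ p < p)]
      rw [(mod_shift q (x ⟨p, hpk⟩) s).symm]
      rw [Nat.mod_eq_of_lt hsq2]
    · exact Nat.mod_lt _ hq0
end

section
/- Let q ≥ 2 and k ≥ 1 be integers and x a q-ary sequence of length k. Then the weight progression of z ↦ w(x ⊕_q b(z)) is cyclic with the same step rule at the wrap-around: w(x ⊕_q b(0)) − w(x ⊕_q b(kq−1)) ∈ {1, −(q−1)}. -/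
/-- the weight progression z ↦ w(x ⊕_q b(z)) is cyclic with the same step
    rule at the wrap-around: w(x ⊕_q b(0)) - w(x ⊕_q b(kq-1)) ∈ {1, -(q-1)}. -/
theorem stmt4 (q k : ℕ) (hq : 2 ≤ q) (hk : 1 ≤ k)
    (x : Fin k → ℕ) (hx : ∀ i, x i < q) :
    (wt (addq q x (bz q k 0)) : ℤ) - (wt (addq q x (bz q k (k * q - 1))) : ℤ) = 1 ∨
    (wt (addq q x (bz q k 0)) : ℤ) - (wt (addq q x (bz q k (k * q - 1))) : ℤ) = -((q : ℤ) - 1) := by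
  obtain ⟨q', rfl⟩ : ∃ q', q = q' + 1 := ⟨q - 1, by omega⟩
  have hk0 : 0 < k := hk
  set i₀ : Fin k := ⟨k - 1, by omega⟩ with hi₀
  have h1 : ∀ i : Fin k, addq (q' + 1) x (bz (q' + 1) k 0) i = x i := by
    intro i
    simp [addq, bz, bvec, Nat.mod_eq_of_lt (hx i), Nat.zero_div]
  have hz : k * (q' + 1) - 1 = (k - 1) + q' * k := by
    have : k * (q' + 1) = q' * k + k := by ring
    omega
  have hdiv : (k * (q' + 1) - 1) / k = q' := by
    rw [hz, Nat.add_mul_div_right _ _ hk0, Nat.div_eq_of_lt (by omega)]; omega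
  have hmod : (k * (q' + 1) - 1) % k = k - 1 := by
    rw [hz, Nat.add_mul_mod_self_right, Nat.mod_eq_of_lt (by omega)]
  have h2 : ∀ i : Fin k, addq (q' + 1) x (bz (q' + 1) k (k * (q' + 1) - 1)) i =
      if (i : ℕ) < k - 1 then x i else (x i + q') % (q' + 1) := by
    intro i
    simp only [addq, bz, bvec, hdiv, hmod]
    by_cases h : (i : ℕ) < k - 1
    · simp [h, Nat.mod_self, Nat.mod_eq_of_lt (hx i)]
    · simp [h]
  have key : (wt (addq (q' + 1) x (bz (q' + 1) k 0)) : ℤ) -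
      (wt (addq (q' + 1) x (bz (q' + 1) k (k * (q' + 1) - 1))) : ℤ) =
      (x i₀ : ℤ) - ((x i₀ + q') % (q' + 1) : ℕ) := by
    simp only [wt, Nat.cast_sum, ← Finset.sum_sub_distrib]
    rw [Finset.sum_eq_single i₀]
    · rw [h1, h2]
      have : ¬ ((i₀ : ℕ) < k - 1) := by simp [hi₀]
      simp [this]
    · intro i _ hne
      rw [h1, h2]
      have : (i : ℕ) < k - 1 := by
        have := i.isLt
        have : (i : ℕ) ≠ k - 1 := fun h => hne (Fin.ext h)
        omega
      simp [this]
    · intro h; exact absurd (Finset.mem_univ i₀) h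
  rcases Nat.eq_zero_or_pos (x i₀) with h0 | h0
  · right
    rw [key, h0]
    rw [Nat.mod_eq_of_lt (by omega)]
    push_cast
    ring
  · left
    rw [key]
    have : x i₀ + q' = (x i₀ - 1) + 1 * (q' + 1) := by omega
    rw [this, Nat.add_mul_mod_self_right, Nat.mod_eq_of_lt (by have := hx i₀; omega)]
    have := hx i₀
    push_cast [Nat.cast_sub h0]
    ring
end

section
/- Let q ≥ 2 and k ≥ 1 be integers and x a q-ary sequence of length k. Then the sum over all kq weighting sequences of the weights of x ⊕_q b(z) equals kq times the balancing value: Σ_{z=0}^{kq−1} w(x ⊕_q b(z)) = k²q(q−1)/2. Equivalently, the average of w(x ⊕_q b(z)) over 0 ≤ z ≤ kq−1 is exactly β_{k,q} = k(q−1)/2. -/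
lemma sum_mod_perm (q a : ℕ) (hq : 0 < q) (ha : a < q) :
    ∑ s ∈ Finset.range q, (a + s) % q = ∑ s ∈ Finset.range q, s := by
  refine Finset.sum_nbij' (i := fun s => (a + s) % q) (j := fun t => (t + (q - a)) % q)
    ?_ ?_ ?_ ?_ ?_
  · intro s _; simpa using Nat.mod_lt _ hq
  · intro t _; simpa using Nat.mod_lt _ hq
  · intro s hs
    simp only [Finset.mem_range] at hs
    show ((a + s) % q + (q - a)) % q = s
    rw [Nat.mod_add_mod, show a + s + (q - a) = s + 1 * q by omega,
      Nat.add_mul_mod_self_right, Nat.mod_eq_of_lt hs]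
  · intro t ht
    simp only [Finset.mem_range] at ht
    show (a + (t + (q - a)) % q) % q = t
    rw [Nat.add_mod_mod, show a + (t + (q - a)) = t + 1 * q by omega,
      Nat.add_mul_mod_self_right, Nat.mod_eq_of_lt ht]
  · intro s _; rfl

lemma sum_range_mul_div_mod (k q : ℕ) (hk : 0 < k) (f : ℕ → ℕ → ℕ) :
    ∑ z ∈ Finset.range (k * q), f (z / k) (z % k)
      = ∑ s ∈ Finset.range q, ∑ p ∈ Finset.range k, f s p := by
  rw [← Finset.sum_product']
  refine Finset.sum_nbij' (i := fun z => (z / k, z % k)) (j := fun sp => sp.1 * k + sp.2)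
    ?_ ?_ ?_ ?_ ?_
  · intro z hz
    simp only [Finset.mem_range, Finset.mem_product] at *
    exact ⟨Nat.div_lt_of_lt_mul (by omega), Nat.mod_lt _ hk⟩
  · intro sp hsp
    simp only [Finset.mem_range, Finset.mem_product] at *
    obtain ⟨h1, h2⟩ := hsp
    calc sp.1 * k + sp.2 < sp.1 * k + k := by omega
    _ = (sp.1 + 1) * k := by ring
    _ ≤ q * k := Nat.mul_le_mul_right _ (by omega)
    _ = k * q := Nat.mul_comm _ _
  · intro z _
    show z / k * k + z % k = z
    rw [Nat.mul_comm]
    exact Nat.div_add_mod z k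
  · intro sp hsp
    simp only [Finset.mem_range, Finset.mem_product] at hsp
    have h1 : (sp.1 * k + sp.2) / k = sp.1 := by
      rw [Nat.mul_comm, Nat.mul_add_div hk, Nat.div_eq_of_lt hsp.2, Nat.add_zero]
    have h2 : (sp.1 * k + sp.2) % k = sp.2 := by
      rw [Nat.mul_comm, Nat.mul_add_mod, Nat.mod_eq_of_lt hsp.2]
    show ((sp.1 * k + sp.2) / k, (sp.1 * k + sp.2) % k) = sp
    rw [h1, h2]
  · intro z _; rfl

/-- the sum over all kq weighting sequences of the weights w(x ⊕_q b(z))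
    equals k²q(q-1)/2, i.e. the average over 0 ≤ z ≤ kq-1 is exactly β_{k,q} = k(q-1)/2. -/
theorem stmt5 (q k : ℕ) (hq : 2 ≤ q) (hk : 1 ≤ k)
    (x : Fin k → ℕ) (hx : ∀ i, x i < q) :
    2 * ∑ z ∈ Finset.range (k * q), wt (addq q x (bz q k z)) = k ^ 2 * q * (q - 1) := by
  have hq0 : 0 < q := by omega
  have hk0 : 0 < k := hk
  set S := ∑ s ∈ Finset.range q, s with hS
  have hS2 : S * 2 = q * (q - 1) := by
    simpa using Finset.sum_range_id_mul_two q
  have inner : ∀ i : Fin k,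
      ∑ s ∈ Finset.range q, ∑ p ∈ Finset.range k, (x i + bvec q k s p i) % q = k * S := by
    intro i
    have hB : ∑ s ∈ Finset.range q, (x i + s) % q = S := sum_mod_perm q (x i) hq0 (hx i)
    have hA : ∑ s ∈ Finset.range q, (x i + (s + 1) % q) % q = S := by
      have h1 : ∀ s, (x i + (s + 1) % q) % q = ((x i + 1) % q + s) % q := by
        intro s
        rw [Nat.add_mod_mod, Nat.mod_add_mod, show x i + (s + 1) = x i + 1 + s by ring]
      rw [Finset.sum_congr rfl (fun s _ => h1 s)]
      exact sum_mod_perm q _ hq0 (Nat.mod_lt _ hq0)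
    have hik : (i : ℕ) < k := i.isLt
    calc ∑ s ∈ Finset.range q, ∑ p ∈ Finset.range k, (x i + bvec q k s p i) % q
        = ∑ s ∈ Finset.range q,
            ((k - ((i : ℕ) + 1)) * ((x i + (s + 1) % q) % q)
              + ((i : ℕ) + 1) * ((x i + s) % q)) := by
          refine Finset.sum_congr rfl fun s _ => ?_
          have h2 : ∀ p, (x i + bvec q k s p i) % q
              = if (i : ℕ) < p then (x i + (s + 1) % q) % q else (x i + s) % q := by
            intro p; simp only [bvec]; split <;> rfl
          rw [Finset.sum_congr rfl (fun p _ => h2 p), Finset.sum_ite,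
            Finset.sum_const, Finset.sum_const, smul_eq_mul, smul_eq_mul]
          congr 2
          · have : Finset.filter (fun p => (i : ℕ) < p) (Finset.range k)
                = Finset.Ico ((i : ℕ) + 1) k := by
              ext p; simp [Finset.mem_Ico]; omega
            rw [this, Nat.card_Ico]
          · have : Finset.filter (fun p => ¬ (i : ℕ) < p) (Finset.range k)
                = Finset.range ((i : ℕ) + 1) := by
              ext p; simp; omega
            rw [this, Finset.card_range]
      _ = (k - ((i : ℕ) + 1)) * S + ((i : ℕ) + 1) * S := by
          rw [Finset.sum_add_distrib, ← Finset.mul_sum, ← Finset.mul_sum, hA, hB]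
      _ = k * S := by
          rw [← add_mul, show (k - ((i : ℕ) + 1)) + ((i : ℕ) + 1) = k by omega]
  have key : ∑ z ∈ Finset.range (k * q), wt (addq q x (bz q k z)) = k * (k * S) := by
    simp only [wt, addq, bz]
    rw [sum_range_mul_div_mod k q hk0 (fun s p => ∑ i, (x i + bvec q k s p i) % q)]
    rw [Finset.sum_comm]
    calc ∑ p ∈ Finset.range k, ∑ s ∈ Finset.range q, ∑ i : Fin k, (x i + bvec q k s p i) % q
        = ∑ p ∈ Finset.range k, ∑ i : Fin k, ∑ s ∈ Finset.range q, (x i + bvec q k s p i) % q :=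
          Finset.sum_congr rfl fun p _ =>
            Finset.sum_comm (f := fun s (i : Fin k) => (x i + bvec q k s p i) % q)
      _ = ∑ i : Fin k, ∑ p ∈ Finset.range k, ∑ s ∈ Finset.range q, (x i + bvec q k s p i) % q :=
          Finset.sum_comm (f := fun p (i : Fin k) => ∑ s ∈ Finset.range q, (x i + bvec q k s p i) % q)
      _ = ∑ i : Fin k, ∑ s ∈ Finset.range q, ∑ p ∈ Finset.range k, (x i + bvec q k s p i) % q :=
          Finset.sum_congr rfl fun i _ =>
            Finset.sum_comm (f := fun p s => (x i + bvec q k s p i) % q)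
      _ = ∑ _i : Fin k, k * S := by exact Finset.sum_congr rfl fun i _ => inner i
      _ = k * (k * S) := by simp [Finset.sum_const, Finset.card_univ, mul_comm]
  rw [key, show 2 * (k * (k * S)) = k ^ 2 * (S * 2) by ring, hS2]
  ring
end

section
/- Let q ≥ 2 and k ≥ 1 be integers and x a q-ary sequence of length k. Then the minimum over 0 ≤ z ≤ kq−1 of w(x ⊕_q b(z)) is at most β_{k,q} = k(q−1)/2 and the maximum is at least β_{k,q}; precisely, there exist indices z₁ and z₂ with 0 ≤ z₁, z₂ ≤ kq−1 such that 2·w(x ⊕_q b(z₁)) ≤ k(q−1) ≤ 2·w(x ⊕_q b(z₂)). -/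
lemma sum_shift (q c : ℕ) : ∑ s ∈ Finset.range q, (c + s) % q = ∑ s ∈ Finset.range q, s % q := by
  induction c with
  | zero => simp
  | succ c ih =>
    have h1 := Finset.sum_range_succ' (fun s => (c + s) % q) q
    have h2 := Finset.sum_range_succ (fun s => (c + s) % q) q
    have hq0 : (c + q) % q = (c + 0) % q := by simp [Nat.add_mod_right]
    have : ∑ s ∈ Finset.range q, (c + 1 + s) % q = ∑ s ∈ Finset.range q, (c + s) % q := by
      have : ∀ s, (c + 1 + s) % q = (c + (s + 1)) % q := fun s => by ring_nf
      rw [Finset.sum_congr rfl (fun s _ => this s)]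
      omega
    rw [this, ih]

lemma sum_shift' (q c : ℕ) : ∑ s ∈ Finset.range q, (c + s) % q = ∑ s ∈ Finset.range q, s := by
  rw [sum_shift]
  exact Finset.sum_congr rfl fun s hs => Nat.mod_eq_of_lt (Finset.mem_range.mp hs)

lemma ite_sum_aux (k A B : ℕ) (i : Fin k) :
    ∑ p ∈ Finset.range k, (if (i:ℕ) < p then A else B) = (k - 1 - (i:ℕ)) * A + ((i:ℕ) + 1) * B := by
  rw [Finset.sum_ite, Finset.sum_const, Finset.sum_const]
  have h1 : ((Finset.range k).filter (fun p => (i:ℕ) < p)) = Finset.Ico ((i:ℕ)+1) k := by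
    ext p; simp [Finset.mem_Ico]; omega
  have h2 : ((Finset.range k).filter (fun p => ¬ (i:ℕ) < p)) = Finset.range ((i:ℕ)+1) := by
    ext p; simp; omega
  rw [h1, h2, Nat.card_Ico, Finset.card_range]
  have := i.isLt
  simp [smul_eq_mul]; ring_nf; omega

lemma per_i_sum (q k : ℕ) (i : Fin k) (c : ℕ) :
    ∑ s ∈ Finset.range q, ∑ p ∈ Finset.range k, (c + bvec q k s p i) % q
      = k * ∑ v ∈ Finset.range q, v := by
  have hterm : ∀ s p, (c + bvec q k s p i) % q
      = if (i : ℕ) < p then (c + 1 + s) % q else (c + s) % q := by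
    intro s p
    simp only [bvec]
    split
    · conv_rhs => rw [show c + 1 + s = c + (s+1) by ring, Nat.add_mod]
      rw [Nat.add_mod]
      simp
    · rfl
  calc ∑ s ∈ Finset.range q, ∑ p ∈ Finset.range k, (c + bvec q k s p i) % q
      = ∑ s ∈ Finset.range q,
          ((k - 1 - (i:ℕ)) * ((c + 1 + s) % q) + ((i:ℕ) + 1) * ((c + s) % q)) := by
        refine Finset.sum_congr rfl fun s _ => ?_
        rw [Finset.sum_congr rfl (fun p _ => hterm s p), ite_sum_aux]
    _ = (k - 1 - (i:ℕ)) * (∑ s ∈ Finset.range q, (c + 1 + s) % q)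
          + ((i:ℕ) + 1) * (∑ s ∈ Finset.range q, (c + s) % q) := by
        rw [Finset.sum_add_distrib, Finset.mul_sum, Finset.mul_sum]
    _ = (k - 1 - (i:ℕ)) * (∑ v ∈ Finset.range q, v) + ((i:ℕ) + 1) * (∑ v ∈ Finset.range q, v) := by
        rw [sum_shift' q (c+1), sum_shift' q c]
    _ = k * ∑ v ∈ Finset.range q, v := by
        have := i.isLt
        have : (k - 1 - (i:ℕ)) + ((i:ℕ) + 1) = k := by omega
        rw [← add_mul, this]

lemma total_sum (q k : ℕ) (hk : 1 ≤ k) (x : Fin k → ℕ) :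
    ∑ z ∈ Finset.range (k * q), wt (addq q x (bz q k z))
      = k * (k * ∑ v ∈ Finset.range q, v) := by
  have hreindex : ∑ z ∈ Finset.range (k * q), wt (addq q x (bz q k z))
      = ∑ s ∈ Finset.range q, ∑ p ∈ Finset.range k, wt (addq q x (bvec q k s p)) := by
    rw [← Finset.sum_product']
    refine Finset.sum_nbij' (fun z => (z / k, z % k)) (fun sp => sp.1 * k + sp.2) ?_ ?_ ?_ ?_ ?_
    · intro z hz
      simp only [Finset.mem_range] at hz
      simp only [Finset.mem_product, Finset.mem_range]
      constructor
      · exact Nat.div_lt_of_lt_mul (by omega)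
      · exact Nat.mod_lt _ (by omega)
    · intro sp hsp
      simp only [Finset.mem_product, Finset.mem_range] at hsp
      simp only [Finset.mem_range]
      calc sp.1 * k + sp.2 < sp.1 * k + k := by omega
        _ = (sp.1 + 1) * k := by ring
        _ ≤ q * k := Nat.mul_le_mul_right _ (by omega)
        _ = k * q := mul_comm _ _
    · intro z _
      show z / k * k + z % k = z
      rw [mul_comm]; exact Nat.div_add_mod z k
    · intro sp hsp
      simp only [Finset.mem_product, Finset.mem_range] at hsp
      have h1 : (sp.1 * k + sp.2) / k = sp.1 := by
        rw [mul_comm, Nat.mul_add_div (by omega), Nat.div_eq_of_lt hsp.2, add_zero]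
      have h2 : (sp.1 * k + sp.2) % k = sp.2 := by
        rw [mul_comm, Nat.mul_add_mod, Nat.mod_eq_of_lt hsp.2]
      simp [h1, h2]
    · intro z _; rfl
  rw [hreindex]
  have hswap : ∀ s p, wt (addq q x (bvec q k s p)) = ∑ i, (x i + bvec q k s p i) % q := by
    intro s p; rfl
  calc ∑ s ∈ Finset.range q, ∑ p ∈ Finset.range k, wt (addq q x (bvec q k s p))
      = ∑ i : Fin k, ∑ s ∈ Finset.range q, ∑ p ∈ Finset.range k, (x i + bvec q k s p i) % q := by
        simp_rw [hswap]
        have step1 : ∀ s, ∑ p ∈ Finset.range k, ∑ i : Fin k, (x i + bvec q k s p i) % q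
            = ∑ i : Fin k, ∑ p ∈ Finset.range k, (x i + bvec q k s p i) % q :=
          fun s => Finset.sum_comm
        rw [Finset.sum_congr rfl fun s _ => step1 s]
        exact Finset.sum_comm
    _ = ∑ i : Fin k, k * ∑ v ∈ Finset.range q, v := by
        exact Finset.sum_congr rfl fun i _ => per_i_sum q k i (x i)
    _ = k * (k * ∑ v ∈ Finset.range q, v) := by
        rw [Finset.sum_const, Finset.card_univ, Fintype.card_fin, smul_eq_mul]


/-- the minimum of w(x ⊕_q b(z)) over 0 ≤ z ≤ kq-1 is at most
    β_{k,q} = k(q-1)/2 and the maximum is at least β_{k,q}. -/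
theorem stmt6 (q k : ℕ) (hq : 2 ≤ q) (hk : 1 ≤ k)
    (x : Fin k → ℕ) (hx : ∀ i, x i < q) :
    ∃ z₁ z₂ : ℕ, z₁ ≤ k * q - 1 ∧ z₂ ≤ k * q - 1 ∧
      2 * wt (addq q x (bz q k z₁)) ≤ k * (q - 1) ∧
      k * (q - 1) ≤ 2 * wt (addq q x (bz q k z₂)) := by
  have hgauss : 2 * ∑ v ∈ Finset.range q, v = q * (q - 1) := by
    rw [mul_comm, Finset.sum_range_id_mul_two]
  have htot : ∑ z ∈ Finset.range (k * q), 2 * wt (addq q x (bz q k z))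
      = (k * q) * (k * (q - 1)) := by
    rw [← Finset.mul_sum, total_sum q k hk x]
    calc 2 * (k * (k * ∑ v ∈ Finset.range q, v)) = k * k * (2 * ∑ v ∈ Finset.range q, v) := by ring
      _ = k * k * (q * (q-1)) := by rw [hgauss]
      _ = (k * q) * (k * (q-1)) := by ring
  have hne : (Finset.range (k * q)).Nonempty := by
    rw [Finset.nonempty_range_iff]; positivity
  have hconst : ∑ _z ∈ Finset.range (k * q), (k * (q - 1)) = (k * q) * (k * (q - 1)) := by
    rw [Finset.sum_const, Finset.card_range, smul_eq_mul]
  obtain ⟨z₁, hz₁, hle₁⟩ := Finset.exists_le_of_sum_le hne (le_of_eq (htot.trans hconst.symm))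
  obtain ⟨z₂, hz₂, hle₂⟩ := Finset.exists_le_of_sum_le hne (le_of_eq (hconst.trans htot.symm))
  refine ⟨z₁, z₂, ?_, ?_, hle₁, hle₂⟩
  · have := Finset.mem_range.mp hz₁; omega
  · have := Finset.mem_range.mp hz₂; omega
end

section
/- Let q ≥ 2 and k ≥ 1 be integers and x a q-ary sequence of length k. Let m = min_{0 ≤ z ≤ kq−1} w(x ⊕_q b(z)) and M = max_{0 ≤ z ≤ kq−1} w(x ⊕_q b(z)). Then for every integer W with m ≤ W ≤ M there exists an index z with 0 ≤ z ≤ kq−1 such that w(x ⊕_q b(z)) = W; that is, every intermediate weight value between the minimum and the maximum is attained by the weight progression. -/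
lemma sum_le_of_eq_except {k : ℕ} (f g : Fin k → ℕ) (j : Fin k)
    (h1 : ∀ i, i ≠ j → f i = g i) (h2 : f j ≤ g j + 1) :
    ∑ i, f i ≤ (∑ i, g i) + 1 := by
  rw [← Finset.sum_erase_add _ f (Finset.mem_univ j),
      ← Finset.sum_erase_add _ g (Finset.mem_univ j)]
  have h3 : ∑ i ∈ Finset.univ.erase j, f i = ∑ i ∈ Finset.univ.erase j, g i :=
    Finset.sum_congr rfl (fun i hi => h1 i (Finset.ne_of_mem_erase hi))
  omega

lemma mod_succ_le (a q : ℕ) : (a + 1) % q ≤ a % q + 1 := by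
  calc (a + 1) % q = (a % q + 1) % q := by rw [Nat.mod_add_mod]
  _ ≤ a % q + 1 := Nat.mod_le _ _

lemma step_le (q k : ℕ) (hk : 1 ≤ k) (x : Fin k → ℕ) (z : ℕ) :
    wt (addq q x (bz q k (z + 1))) ≤ wt (addq q x (bz q k z)) + 1 := by
  have hk0 : 0 < k := hk
  set s := z / k with hs
  set p := z % k with hp
  have hpk : p < k := Nat.mod_lt _ hk0
  have hz : z = k * s + p := by rw [hs, hp]; exact (Nat.div_add_mod z k).symm
  set j : Fin k := ⟨p, hpk⟩ with hj
  apply sum_le_of_eq_except _ _ j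
  · intro i hij
    have hij' : (i : ℕ) ≠ p := fun h => hij (Fin.ext h)
    by_cases hc : p + 1 < k
    · have hd : (z + 1) / k = s := by
        rw [hz, show k * s + p + 1 = k * s + (p + 1) from by omega,
          Nat.mul_add_div hk0, Nat.div_eq_of_lt hc, Nat.add_zero]
      have hm : (z + 1) % k = p + 1 := by
        rw [hz, show k * s + p + 1 = k * s + (p + 1) from by omega,
          Nat.mul_add_mod, Nat.mod_eq_of_lt hc]
      simp only [addq, bz, bvec, hd, hm, ← hs, ← hp]
      by_cases h : (i : ℕ) < p
      · rw [if_pos h, if_pos (by omega)]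
      · rw [if_neg h, if_neg (by omega)]
    · -- p = k - 1, wrap around
      have hpe : p + 1 = k := by omega
      have hd : (z + 1) / k = s + 1 := by
        rw [hz, show k * s + p + 1 = k * (s + 1) from by rw [Nat.mul_succ]; omega, Nat.mul_div_cancel_left _ hk0]
      have hm : (z + 1) % k = 0 := by
        rw [hz, show k * s + p + 1 = k * (s + 1) from by rw [Nat.mul_succ]; omega, Nat.mul_mod_right]
      have hip : (i : ℕ) < p := by omega
      simp only [addq, bz, bvec, hd, hm, ← hs, ← hp]
      rw [if_neg (by omega : ¬ (i : ℕ) < 0), if_pos hip, Nat.add_mod_mod]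
  · -- the changing coordinate
    have key : ∀ b, addq q x (bz q k (z + 1)) j = (x j + b) % q →
        addq q x (bz q k z) j = (x j + s) % q →
        (x j + b) % q = (x j + s + 1) % q →
        addq q x (bz q k (z + 1)) j ≤ addq q x (bz q k z) j + 1 := by
      intro b e1 e2 e3
      rw [e1, e2, e3]
      exact mod_succ_le (x j + s) q
    have hold : addq q x (bz q k z) j = (x j + s) % q := by
      simp only [addq, bz, bvec, ← hs, ← hp]
      rw [if_neg (by simp [hj] : ¬ ((j : ℕ) < p))]
    by_cases hc : p + 1 < k
    · have hd : (z + 1) / k = s := by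
        rw [hz, show k * s + p + 1 = k * s + (p + 1) from by omega,
          Nat.mul_add_div hk0, Nat.div_eq_of_lt hc, Nat.add_zero]
      have hm : (z + 1) % k = p + 1 := by
        rw [hz, show k * s + p + 1 = k * s + (p + 1) from by omega,
          Nat.mul_add_mod, Nat.mod_eq_of_lt hc]
      apply key ((s + 1) % q)
      · simp only [addq, bz, bvec, hd, hm]
        rw [if_pos (by simp [hj] : (j : ℕ) < p + 1)]
      · exact hold
      · rw [Nat.add_mod_mod, ← Nat.add_assoc]
    · have hd : (z + 1) / k = s + 1 := by
        rw [hz, show k * s + p + 1 = k * (s + 1) from by rw [Nat.mul_succ]; omega, Nat.mul_div_cancel_left _ hk0]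
      have hm : (z + 1) % k = 0 := by
        rw [hz, show k * s + p + 1 = k * (s + 1) from by rw [Nat.mul_succ]; omega, Nat.mul_mod_right]
      apply key (s + 1)
      · simp only [addq, bz, bvec, hd, hm]
        rw [if_neg (by omega : ¬ ((j : ℕ) < 0))]
      · exact hold
      · rw [← Nat.add_assoc]

lemma period_one (q k : ℕ) (hk : 1 ≤ k) (x : Fin k → ℕ) (z : ℕ) :
    addq q x (bz q k (z + k * q)) = addq q x (bz q k z) := by
  have hk0 : 0 < k := hk
  funext i
  have hd : (z + k * q) / k = z / k + q := Nat.add_mul_div_left z q hk0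
  have hm : (z + k * q) % k = z % k := Nat.add_mul_mod_self_left z k q
  simp only [addq, bz, bvec, hd, hm]
  by_cases h : (i : ℕ) < z % k
  · rw [if_pos h, if_pos h, show z / k + q + 1 = z / k + 1 + q from by omega,
      Nat.add_mod_right]
  · rw [if_neg h, if_neg h, ← Nat.add_assoc, Nat.add_mod_right]

lemma period_n (q k : ℕ) (hk : 1 ≤ k) (x : Fin k → ℕ) :
    ∀ (m z : ℕ), wt (addq q x (bz q k (z + m * (k * q)))) = wt (addq q x (bz q k z))
  | 0, z => by simp
  | (m + 1), z => by
    rw [show z + (m + 1) * (k * q) = (z + k * q) + m * (k * q) from by ring,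
      period_n q k hk x m (z + k * q), period_one q k hk x z]

lemma ivt (g : ℕ → ℕ) (hstep : ∀ n, g (n + 1) ≤ g n + 1) (W : ℕ) :
    ∀ n a, g a ≤ W → W ≤ g (a + n) → ∃ c, a ≤ c ∧ c ≤ a + n ∧ g c = W := by
  intro n
  induction n with
  | zero => intro a h1 h2; simp only [Nat.add_zero] at h2; exact ⟨a, le_refl a, by omega, by omega⟩
  | succ n ih =>
    intro a h1 h2
    rw [← Nat.add_assoc] at h2
    by_cases h : W ≤ g (a + n)
    · obtain ⟨c, hc1, hc2, hc3⟩ := ih a h1 h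
      exact ⟨c, hc1, by omega, hc3⟩
    · have := hstep (a + n)
      exact ⟨a + n + 1, by omega, by omega, by omega⟩

/-- every intermediate weight value W between the minimum and the maximum
    of the weight progression z ↦ w(x ⊕_q b(z)), 0 ≤ z ≤ kq-1, is attained.
    (m ≤ W is expressed as: some z₁ has weight ≤ W; W ≤ M as: some z₂ has weight ≥ W.) -/
theorem stmt7 (q k : ℕ) (hq : 2 ≤ q) (hk : 1 ≤ k)
    (x : Fin k → ℕ) (hx : ∀ i, x i < q) (W : ℕ)
    (hm : ∃ z₁ : ℕ, z₁ ≤ k * q - 1 ∧ wt (addq q x (bz q k z₁)) ≤ W)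
    (hM : ∃ z₂ : ℕ, z₂ ≤ k * q - 1 ∧ W ≤ wt (addq q x (bz q k z₂))) :
    ∃ z : ℕ, z ≤ k * q - 1 ∧ wt (addq q x (bz q k z)) = W := by
  obtain ⟨z₁, hz₁, h1⟩ := hm
  obtain ⟨z₂, hz₂, h2⟩ := hM
  have hkq : 0 < k * q := Nat.mul_pos hk (by omega)
  have hb : z₁ ≤ z₂ + z₁ * (k * q) := by
    have : z₁ * 1 ≤ z₁ * (k * q) := Nat.mul_le_mul_left z₁ hkq
    omega
  have hstep : ∀ n : ℕ, wt (addq q x (bz q k (n + 1))) ≤ wt (addq q x (bz q k n)) + 1 :=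
    fun n => step_le q k hk x n
  have h2' : W ≤ wt (addq q x (bz q k (z₁ + (z₂ + z₁ * (k * q) - z₁)))) := by
    rw [show z₁ + (z₂ + z₁ * (k * q) - z₁) = z₂ + z₁ * (k * q) from by omega,
      period_n q k hk x z₁ z₂]
    exact h2
  obtain ⟨c, hc1, hc2, hc3⟩ :=
    ivt (fun z => wt (addq q x (bz q k z))) hstep W (z₂ + z₁ * (k * q) - z₁) z₁ h1 h2'
  refine ⟨c % (k * q), ?_, ?_⟩
  · have := Nat.mod_lt c hkq
    omega
  · calc wt (addq q x (bz q k (c % (k * q))))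
        = wt (addq q x (bz q k (c % (k * q) + c / (k * q) * (k * q)))) :=
          (period_n q k hk x (c / (k * q)) (c % (k * q))).symm
    _ = wt (addq q x (bz q k c)) := by rw [Nat.mod_add_div']
    _ = W := hc3
end

section
/- Let q ≥ 2 and r' ≥ 1 be integers. If d and d' are q-ary sequences of length r' that are consecutive in lexicographic order, i.e. the base-q integer value of d' (most significant digit first) equals the base-q integer value of d plus 1, then the Gray codewords E(d) and E(d') differ in exactly one symbol position, and at that position the two symbols differ by exactly 1; consequently |w(E(d')) − w(E(d))| = 1. -/
/-- (r',q)-Gray encoding, with accumulator S = sum of already-produced Gray symbols: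
    g_i = d_i if S is even, g_i = q-1-d_i if S is odd.  E(d) = grayEnc q 0 d. -/
def grayEnc (q : ℕ) : ℕ → List ℕ → List ℕ
  | _, [] => []
  | S, d :: ds =>
      let g := if S % 2 = 0 then d else q - 1 - d
      g :: grayEnc q (S + g) ds

/-- The base-q integer value of a digit string, most significant digit first. -/
def valBE (q : ℕ) (l : List ℕ) : ℕ := l.foldl (fun a d => a * q + d) 0

lemma grayEnc_cons (q S a : ℕ) (l : List ℕ) :
    grayEnc q S (a :: l) =
      (if S % 2 = 0 then a else q - 1 - a) ::
        grayEnc q (S + (if S % 2 = 0 then a else q - 1 - a)) l := rfl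

lemma grayEnc_length (q S : ℕ) (l : List ℕ) : (grayEnc q S l).length = l.length := by
  induction l generalizing S with
  | nil => rfl
  | cons a l ih => rw [grayEnc_cons]; simp [ih]

lemma valBE_foldl (q : ℕ) (l : List ℕ) (a : ℕ) :
    l.foldl (fun a d => a * q + d) a = a * q ^ l.length + valBE q l := by
  induction l generalizing a with
  | nil => simp [valBE]
  | cons b l ih =>
    have hb : valBE q (b :: l) = b * q ^ l.length + valBE q l := by
      show l.foldl (fun a d => a * q + d) (0 * q + b) = _
      rw [ih]; ring_nf
    simp only [List.foldl_cons, List.length_cons]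
    rw [ih (a * q + b), hb]
    ring

lemma valBE_cons (q b : ℕ) (l : List ℕ) :
    valBE q (b :: l) = b * q ^ l.length + valBE q l := by
  show l.foldl (fun a d => a * q + d) (0 * q + b) = _
  rw [valBE_foldl]; ring_nf

lemma valBE_lt (q : ℕ) (hq : 1 ≤ q) (l : List ℕ) (h : ∀ a ∈ l, a < q) :
    valBE q l < q ^ l.length := by
  induction l with
  | nil => simp [valBE]
  | cons b l ih =>
    rw [valBE_cons]
    have hb : b < q := h b (by simp)
    have hl : valBE q l < q ^ l.length := ih (fun a ha => h a (by simp [ha]))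
    calc b * q ^ l.length + valBE q l < (b + 1) * q ^ l.length := by nlinarith
      _ ≤ q * q ^ l.length := Nat.mul_le_mul_right _ hb
      _ = q ^ (b :: l).length := by rw [List.length_cons, pow_succ]; ring

lemma valBE_zero (q : ℕ) (hq : 1 ≤ q) (l : List ℕ) (h : valBE q l = 0) :
    l = List.replicate l.length 0 := by
  induction l with
  | nil => rfl
  | cons b l ih =>
    rw [valBE_cons] at h
    have hQ : 0 < q ^ l.length := Nat.pow_pos hq
    have hb : b = 0 := by nlinarith
    have hl : valBE q l = 0 := by omega
    rw [List.length_cons, List.replicate_succ, hb]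
    exact congrArg (List.cons 0) (ih hl)

lemma valBE_max (q : ℕ) (hq : 1 ≤ q) (l : List ℕ) (hlt : ∀ a ∈ l, a < q)
    (h : valBE q l + 1 = q ^ l.length) :
    l = List.replicate l.length (q - 1) := by
  induction l with
  | nil => rfl
  | cons b l ih =>
    rw [valBE_cons] at h
    have hQ : 0 < q ^ l.length := Nat.pow_pos hq
    have hb : b < q := hlt b (by simp)
    have hl : valBE q l < q ^ l.length := valBE_lt q hq l (fun a ha => hlt a (by simp [ha]))
    have hpow : q ^ (b :: l).length = q * q ^ l.length := by
      rw [List.length_cons, pow_succ]; ring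
    rw [hpow] at h
    -- b * Q + v + 1 = q * Q, v < Q ⇒ q ≤ b + 1
    have hble : q ≤ b + 1 := by
      by_contra hc
      push_neg at hc
      have h1 : b * q ^ l.length + valBE q l + 1 ≤ (b + 1) * q ^ l.length := by nlinarith
      have h2 : (b + 1) * q ^ l.length < q * q ^ l.length :=
        (Nat.mul_lt_mul_right hQ).mpr hc
      omega
    have hbq : b + 1 = q := by omega
    have hveq : valBE q l + 1 = q ^ l.length := by
      have h2 : q * q ^ l.length = b * q ^ l.length + q ^ l.length := by
        rw [← hbq]; ring
      omega
    rw [List.length_cons, List.replicate_succ]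
    have hbval : b = q - 1 := by omega
    rw [hbval]
    exact congrArg (List.cons (q - 1)) (ih (fun a ha => hlt a (by simp [ha])) hveq)

/-- Opposite-parity accumulators give equal Gray encodings on (q-1)-runs vs 0-runs. -/
lemma gray_run (q : ℕ) (k : ℕ) : ∀ S S' : ℕ, S % 2 ≠ S' % 2 →
    grayEnc q S (List.replicate k (q - 1)) = grayEnc q S' (List.replicate k 0) := by
  induction k with
  | zero => intro S S' _; rfl
  | succ k ih =>
    intro S S' hpar
    rw [List.replicate_succ, List.replicate_succ, grayEnc_cons, grayEnc_cons]
    by_cases h : S % 2 = 0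
    · have h2 : ¬ S' % 2 = 0 := by omega
      rw [if_pos h, if_neg h2, Nat.sub_zero]
      exact congrArg _ (ih (S + (q - 1)) (S' + (q - 1)) (by omega))
    · have h2 : S' % 2 = 0 := by omega
      rw [if_neg h, if_pos h2, Nat.sub_self]
      exact congrArg _ (ih (S + 0) (S' + 0) (by omega))

/-- Structural main lemma. -/
lemma gray_succ (q : ℕ) (hq : 2 ≤ q) :
    ∀ (d d' : List ℕ) (S : ℕ), d.length = d'.length →
    (∀ a ∈ d, a < q) → (∀ a ∈ d', a < q) →
    valBE q d' = valBE q d + 1 →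
    ∃ P g g' T, grayEnc q S d = P ++ g :: T ∧ grayEnc q S d' = P ++ g' :: T ∧
      (g + 1 = g' ∨ g' + 1 = g) := by
  intro d
  induction d with
  | nil =>
    intro d' S hlen _ _ hv
    rcases d' with _ | ⟨a', l'⟩
    · simp [valBE] at hv
    · simp at hlen
  | cons a l ih =>
    intro d' S hlen hdq hd'q hv
    rcases d' with _ | ⟨a', l'⟩
    · simp at hlen
    have hm : l.length = l'.length := by simpa using hlen
    rw [valBE_cons, valBE_cons, ← hm] at hv
    set Q := q ^ l.length with hQdef
    have hQ : 0 < Q := Nat.pow_pos (by omega)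
    have hvl : valBE q l < Q := valBE_lt q (by omega) l (fun x hx => hdq x (by simp [hx]))
    have hvl' : valBE q l' < Q := by
      rw [hQdef, hm]; exact valBE_lt q (by omega) l' (fun x hx => hd'q x (by simp [hx]))
    have key : (a' = a ∧ valBE q l' = valBE q l + 1) ∨
        (a' = a + 1 ∧ valBE q l + 1 = Q ∧ valBE q l' = 0) := by
      by_cases hcase : valBE q l + 1 < Q
      · left
        have h1 : (a' * Q + valBE q l') % Q = valBE q l' := by
          rw [add_comm, Nat.add_mul_mod_self_right]; exact Nat.mod_eq_of_lt hvl'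
        have h2 : (a * Q + (valBE q l + 1)) % Q = valBE q l + 1 := by
          rw [add_comm, Nat.add_mul_mod_self_right]; exact Nat.mod_eq_of_lt hcase
        have hv' : a' * Q + valBE q l' = a * Q + (valBE q l + 1) := by omega
        rw [hv'] at h1
        have hvsucc : valBE q l' = valBE q l + 1 := by omega
        have hmul : a' * Q = a * Q := by omega
        exact ⟨Nat.eq_of_mul_eq_mul_right hQ hmul, hvsucc⟩
      · right
        have hx : valBE q l + 1 = Q := by omega
        have h2 : a * Q + valBE q l + 1 = (a + 1) * Q := by
          have : (a + 1) * Q = a * Q + Q := by ring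
          omega
        rw [h2] at hv
        have h1 : (a' * Q + valBE q l') % Q = valBE q l' := by
          rw [add_comm, Nat.add_mul_mod_self_right]; exact Nat.mod_eq_of_lt hvl'
        have h3 : ((a + 1) * Q) % Q = 0 := Nat.mul_mod_left _ _
        rw [hv, h3] at h1
        have hmul : a' * Q = (a + 1) * Q := by omega
        exact ⟨Nat.eq_of_mul_eq_mul_right hQ hmul, hx, h1.symm⟩
    rcases key with ⟨ha, hvsucc⟩ | ⟨ha, hmax, hzero⟩
    · -- same head, recurse
      subst ha
      rw [grayEnc_cons, grayEnc_cons]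
      set g0 := if S % 2 = 0 then a' else q - 1 - a' with hg0
      obtain ⟨P, g, g', T, h1, h2, h3⟩ := ih l' (S + g0) hm
        (fun x hx => hdq x (by simp [hx])) (fun x hx => hd'q x (by simp [hx])) hvsucc
      exact ⟨g0 :: P, g, g', T, by rw [List.cons_append, h1], by rw [List.cons_append, h2], h3⟩
    · -- head bumps, tail flips parity
      have hl : l = List.replicate l.length (q - 1) :=
        valBE_max q (by omega) l (fun x hx => hdq x (by simp [hx])) hmax
      have hl' : l' = List.replicate l'.length 0 := valBE_zero q (by omega) l' hzero
      have ha' : a + 1 < q := by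
        have := hd'q a' (by simp); omega
      subst ha
      rw [grayEnc_cons, grayEnc_cons]
      set g := if S % 2 = 0 then a else q - 1 - a with hg
      set g' := if S % 2 = 0 then a + 1 else q - 1 - (a + 1) with hg'
      have hgg : g + 1 = g' ∨ g' + 1 = g := by
        by_cases h : S % 2 = 0
        · left; rw [hg, hg', if_pos h, if_pos h]
        · right; rw [hg, hg', if_neg h, if_neg h]; omega
      have hT : grayEnc q (S + g') l' = grayEnc q (S + g) l := by
        rw [hl, hl', ← hm]
        exact (gray_run q l.length (S + g) (S + g') (by omega)).symm
      exact ⟨[], g, g', grayEnc q (S + g) l, by simp, by rw [hT]; simp, hgg⟩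

/-- if d and d' are q-ary sequences of length r' consecutive in
    lexicographic order (valBE q d' = valBE q d + 1), then the Gray codewords E(d) and
    E(d') differ in exactly one position, at that position the symbols differ by
    exactly 1, and consequently |w(E(d')) - w(E(d))| = 1. -/
theorem stmt11 (q r' : ℕ) (hq : 2 ≤ q) (hr' : 1 ≤ r')
    (d d' : List ℕ) (hd : d.length = r') (hd' : d'.length = r')
    (hdq : ∀ a ∈ d, a < q) (hd'q : ∀ a ∈ d', a < q)
    (hsucc : valBE q d' = valBE q d + 1) :
    (∃ j : ℕ, j < r' ∧
      (∀ i : ℕ, i < r' → i ≠ j →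
        (grayEnc q 0 d).getD i 0 = (grayEnc q 0 d').getD i 0) ∧
      ((grayEnc q 0 d).getD j 0 + 1 = (grayEnc q 0 d').getD j 0 ∨
        (grayEnc q 0 d').getD j 0 + 1 = (grayEnc q 0 d).getD j 0)) ∧
    (((grayEnc q 0 d').sum : ℤ) - ((grayEnc q 0 d).sum : ℤ) = 1 ∨
      ((grayEnc q 0 d').sum : ℤ) - ((grayEnc q 0 d).sum : ℤ) = -1) := by
  obtain ⟨P, g, g', T, h1, h2, h3⟩ :=
    gray_succ q hq d d' 0 (by omega) hdq hd'q hsucc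
  have hlenP : P.length + 1 + T.length = r' := by
    have h := grayEnc_length q 0 d
    rw [h1] at h
    simp at h
    omega
  refine ⟨⟨P.length, by omega, ?_, ?_⟩, ?_⟩
  · intro i hi hij
    rw [h1, h2]
    rcases Nat.lt_or_ge i P.length with h | h
    · rw [List.getD_append _ _ _ _ h, List.getD_append _ _ _ _ h]
    · rw [List.getD_append_right _ _ _ _ h, List.getD_append_right _ _ _ _ h]
      have hgt : i - P.length = (i - P.length - 1) + 1 := by omega
      rw [hgt, List.getD_cons_succ, List.getD_cons_succ]
  · rw [h1, h2, List.getD_append_right _ _ _ _ (le_refl _),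
      List.getD_append_right _ _ _ _ (le_refl _)]
    simpa using h3
  · rw [h1, h2]
    simp only [List.sum_append, List.sum_cons]
    rcases h3 with h3 | h3
    · left; push_cast; omega
    · right; push_cast; omega
end

section
/- Let q ≥ 2 and k ≥ 1 be integers. The kq weighting sequences are pairwise distinct: the map z ↦ b(z) is injective on {0, 1, …, kq−1}; equivalently, b(s,p) = b(s',p') with 0 ≤ s, s' ≤ q−1 and 0 ≤ p, p' ≤ k−1 implies s = s' and p = p'. -/
/-- the kq weighting sequences are pairwise distinct: z ↦ b(z) is
    injective on {0,…,kq-1}; equivalently b(s,p) = b(s',p') with 0 ≤ s,s' ≤ q-1 and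
    0 ≤ p,p' ≤ k-1 implies s = s' and p = p'. -/
theorem stmt12 (q k : ℕ) (hq : 2 ≤ q) (hk : 1 ≤ k) :
    Set.InjOn (bz q k) {z : ℕ | z ≤ k * q - 1} ∧
    (∀ s p s' p' : ℕ, s ≤ q - 1 → p ≤ k - 1 → s' ≤ q - 1 → p' ≤ k - 1 →
      bvec q k s p = bvec q k s' p' → s = s' ∧ p = p') := by
  have hmod : ∀ s : ℕ, s ≤ q - 1 → 1 ≤ s → (s + 1) % q ≠ s := by
    intro s hs h1 h
    rcases Nat.lt_or_ge (s + 1) q with hlt | hge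
    · rw [Nat.mod_eq_of_lt hlt] at h; omega
    · have hsq : s + 1 = q := by omega
      rw [hsq, Nat.mod_self] at h; omega
  have hmod0 : ∀ s : ℕ, s ≤ q - 1 → (s + 1) % q ≠ s ∨ s = 0 := by
    intro s hs
    rcases Nat.eq_zero_or_pos s with h0 | h1
    · exact Or.inr h0
    · exact Or.inl (hmod s hs h1)
  have hkey : ∀ s p s' p' : ℕ, s ≤ q - 1 → p ≤ k - 1 → s' ≤ q - 1 → p' ≤ k - 1 →
      bvec q k s p = bvec q k s' p' → s = s' ∧ p = p' := by
    intro s p s' p' hs hp hs' hp' heq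
    have hpk : p < k := by omega
    have hp'k : p' < k := by omega
    have hlast := congrFun heq ⟨k - 1, by omega⟩
    simp only [bvec] at hlast
    rw [if_neg (by simp; omega), if_neg (by simp; omega)] at hlast
    refine ⟨hlast, ?_⟩
    subst hlast
    rcases lt_trichotomy p p' with hlt | heqp | hgt
    · exfalso
      have h := congrFun heq ⟨p, by omega⟩
      simp only [bvec] at h
      rw [if_neg (by simp), if_pos (by simpa using hlt)] at h
      rcases Nat.lt_or_ge (s + 1) q with hq1 | hq2
      · rw [Nat.mod_eq_of_lt hq1] at h; omega
      · have : s + 1 = q := by omega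
        rw [this, Nat.mod_self] at h; omega
    · exact heqp
    · exfalso
      have h := congrFun heq ⟨p', by omega⟩
      simp only [bvec] at h
      rw [if_pos (by simpa using hgt), if_neg (by simp)] at h
      rcases Nat.lt_or_ge (s + 1) q with hq1 | hq2
      · rw [Nat.mod_eq_of_lt hq1] at h; omega
      · have : s + 1 = q := by omega
        rw [this, Nat.mod_self] at h; omega
  refine ⟨?_, hkey⟩
  intro z hz z' hz' heq
  simp only [Set.mem_setOf_eq] at hz hz'
  have hkq : 2 ≤ k * q := by
    calc 2 = 1 * 2 := by ring
    _ ≤ k * q := Nat.mul_le_mul hk hq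
  have hzlt : z < k * q := by omega
  have hz'lt : z' < k * q := by omega
  have hd : z / k < q := Nat.div_lt_of_lt_mul (by omega)
  have hd' : z' / k < q := Nat.div_lt_of_lt_mul (by omega)
  have hm : z % k < k := Nat.mod_lt _ (by omega)
  have hm' : z' % k < k := Nat.mod_lt _ (by omega)
  have := hkey (z / k) (z % k) (z' / k) (z' % k) (by omega) (by omega) (by omega) (by omega) heq
  obtain ⟨hdiv, hmodeq⟩ := this
  have e1 := Nat.div_add_mod z k
  have e2 := Nat.div_add_mod z' k
  rw [hdiv, hmodeq] at e1
  omega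
end
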